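/- (Lemma 3.2(ii)) Assume (d2,q2) ∈ S1 and let (u,v) be a positive equilibrium. For fixed i ∈ {1,2}, if there exists l with 1 ≤ l ≤ m_i such that f^i_l ≤ 0, then g^i_l ≤ 0 in case l = m_i, and g^i_l < 0 in case 1 ≤ l < m_i. -/

import Mathlib

open Finset Filter

noncomputable section

/-- Length of river segment `i` (segments are numbered 1, 2, 3; segments 1 and 2 are the
branches, segment 3 is the main river). -/
def seg (m1 m2 m3 : ℕ) (i : ℕ) : ℕ := if i = 1 then m1 else if i = 2 then m2 else m3

/-- `w` is positive on all patches of the Y-shaped network. -/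
def YPos (m1 m2 m3 : ℕ) (w : ℕ → ℕ → ℝ) : Prop :=
  ∀ i k, (i = 1 ∨ i = 2 ∨ i = 3) → 1 ≤ k → k ≤ seg m1 m2 m3 i → 0 < w i k

/-- Steady-state equations on the Y-shaped network for one species `w` with dispersal rate `d`,
drift rate `q`, intrinsic growth rate `r`, and competitor density `c` (take `c = 0` for the
single-species model).  The convention `w i 0 = w 3 m3` (for `i = 1, 2`) is part of
the predicate. -/
def YEq (m1 m2 m3 : ℕ) (d q r : ℝ) (w c : ℕ → ℕ → ℝ) : Prop :=
  w 1 0 = w 3 m3 ∧ w 2 0 = w 3 m3 ∧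
  (∀ i, (i = 1 ∨ i = 2) → ∀ k, 1 ≤ k → k + 1 ≤ seg m1 m2 m3 i →
    d * w i (k - 1) - (2 * d + q) * w i k + (d + q) * w i (k + 1)
      + w i k * (r - w i k - c i k) = 0) ∧
  (∀ k, 2 ≤ k → k + 1 ≤ m3 →
    d * w 3 (k - 1) - (2 * d + q) * w 3 k + (d + q) * w 3 (k + 1)
      + w 3 k * (r - w 3 k - c 3 k) = 0) ∧
  (∀ i, (i = 1 ∨ i = 2) →
    -(d + q) * w i (seg m1 m2 m3 i) + d * w i (seg m1 m2 m3 i - 1)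
      + w i (seg m1 m2 m3 i) * (r - w i (seg m1 m2 m3 i) - c i (seg m1 m2 m3 i)) = 0) ∧
  (-d * w 3 1 + (d + q) * w 3 2 + w 3 1 * (r - w 3 1 - c 3 1) = 0) ∧
  (d * w 3 (m3 - 1) - (3 * d + q) * w 3 m3 + (d + q) * (w 1 1 + w 2 1)
    + w 3 m3 * (r - w 3 m3 - c 3 m3) = 0)

/-- Positive equilibrium of the two-species competition patch model on the Y-shaped network. -/
def YPosEquilibrium (m1 m2 m3 : ℕ) (d1 q1 d2 q2 r : ℝ) (u v : ℕ → ℕ → ℝ) : Prop :=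
  YPos m1 m2 m3 u ∧ YPos m1 m2 m3 v ∧
  YEq m1 m2 m3 d1 q1 r u v ∧ YEq m1 m2 m3 d2 q2 r v u

/-- Single-species positive equilibrium for parameters `(d, q)`. -/
def YSingleEquilibrium (m1 m2 m3 : ℕ) (d q r : ℝ) (w : ℕ → ℕ → ℝ) : Prop :=
  YPos m1 m2 m3 w ∧ YEq m1 m2 m3 d q r w (fun _ _ => 0)

/-- The auxiliary flux sequence (`f` when built from `u` with `(d1, q1)`, `g` when built
from `v` with `(d2, q2)`): `Yf ... d q w i k = d * w i (k-1) - (d+q) * w i k` on the index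
range `1 ≤ k ≤ mᵢ` for `i = 1,2` and `2 ≤ k ≤ m3` for `i = 3`, and `0` otherwise (in
particular `f 3 1 = 0` and `f i (mᵢ + 1) = 0` for `i = 1, 2`). -/
def Yf (m1 m2 m3 : ℕ) (d q : ℝ) (w : ℕ → ℕ → ℝ) (i k : ℕ) : ℝ :=
  if i = 3 then (if 2 ≤ k ∧ k ≤ m3 then d * w 3 (k - 1) - (d + q) * w 3 k else 0)
  else (if 1 ≤ k ∧ k ≤ seg m1 m2 m3 i then d * w i (k - 1) - (d + q) * w i k else 0)

/-- The auxiliary sequence `h` built from `v`, on the same index range as `Yf`. -/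
def Yh (m1 m2 m3 : ℕ) (d1 q1 d2 q2 : ℝ) (v : ℕ → ℕ → ℝ) (i k : ℕ) : ℝ :=
  if i = 3 then
    (if 2 ≤ k ∧ k ≤ m3 then (d1 - d2) * (v 3 (k - 1) - v 3 k) - (q1 - q2) * v 3 k else 0)
  else
    (if 1 ≤ k ∧ k ≤ seg m1 m2 m3 i then
      (d1 - d2) * (v i (k - 1) - v i k) - (q1 - q2) * v i k else 0)

/-- `(d, q)` belongs to the region `S1`. -/
def S1mem (d1 q1 d q : ℝ) : Prop :=
  0 < d ∧ d ≤ d1 ∧ 0 < q ∧ q ≤ (q1 / d1) * d ∧ (d, q) ≠ (d1, q1)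

/-- `(d, q)` belongs to the region `S2`. -/
def S2mem (d1 q1 d q : ℝ) : Prop :=
  d1 ≤ d ∧ (q1 / d1) * d ≤ q ∧ (d, q) ≠ (d1, q1)

/-- The linearization at a semi-trivial equilibrium `(a, 0)`, with eigenvalue `0`:
`ψ` solves the linearized system for parameters `(d, q)` with potential `r - a`. -/
def YLinEq (m1 m2 m3 : ℕ) (d q r : ℝ) (a ψ : ℕ → ℕ → ℝ) : Prop :=
  ψ 1 0 = ψ 3 m3 ∧ ψ 2 0 = ψ 3 m3 ∧
  (∀ i, (i = 1 ∨ i = 2) → ∀ k, 1 ≤ k → k + 1 ≤ seg m1 m2 m3 i →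
    d * ψ i (k - 1) - (2 * d + q) * ψ i k + (d + q) * ψ i (k + 1)
      + (r - a i k) * ψ i k = 0) ∧
  (∀ k, 2 ≤ k → k + 1 ≤ m3 →
    d * ψ 3 (k - 1) - (2 * d + q) * ψ 3 k + (d + q) * ψ 3 (k + 1)
      + (r - a 3 k) * ψ 3 k = 0) ∧
  (∀ i, (i = 1 ∨ i = 2) →
    -(d + q) * ψ i (seg m1 m2 m3 i) + d * ψ i (seg m1 m2 m3 i - 1)
      + (r - a i (seg m1 m2 m3 i)) * ψ i (seg m1 m2 m3 i) = 0) ∧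
  (-d * ψ 3 1 + (d + q) * ψ 3 2 + (r - a 3 1) * ψ 3 1 = 0) ∧
  (d * ψ 3 (m3 - 1) - (3 * d + q) * ψ 3 m3 + (d + q) * (ψ 1 1 + ψ 2 1)
    + (r - a 3 m3) * ψ 3 m3 = 0)

/-- Time-dependent equations for one species `W` with competitor `C` on the Y-shaped network
(for `t ≥ 0`), with dispersal rate `d`, drift rate `q` and intrinsic growth rate `r`. -/
def YFlow (m1 m2 m3 : ℕ) (d q r : ℝ) (W C : ℕ → ℕ → ℝ → ℝ) : Prop :=
  (∀ t : ℝ, W 1 0 t = W 3 m3 t) ∧ (∀ t : ℝ, W 2 0 t = W 3 m3 t) ∧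
  (∀ i, (i = 1 ∨ i = 2) → ∀ k, 1 ≤ k → k + 1 ≤ seg m1 m2 m3 i → ∀ t : ℝ, 0 ≤ t →
    HasDerivAt (W i k)
      (d * W i (k - 1) t - (2 * d + q) * W i k t + (d + q) * W i (k + 1) t
        + W i k t * (r - W i k t - C i k t)) t) ∧
  (∀ k, 2 ≤ k → k + 1 ≤ m3 → ∀ t : ℝ, 0 ≤ t →
    HasDerivAt (W 3 k)
      (d * W 3 (k - 1) t - (2 * d + q) * W 3 k t + (d + q) * W 3 (k + 1) t
        + W 3 k t * (r - W 3 k t - C 3 k t)) t) ∧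
  (∀ i, (i = 1 ∨ i = 2) → ∀ t : ℝ, 0 ≤ t →
    HasDerivAt (W i (seg m1 m2 m3 i))
      (-(d + q) * W i (seg m1 m2 m3 i) t + d * W i (seg m1 m2 m3 i - 1) t
        + W i (seg m1 m2 m3 i) t
          * (r - W i (seg m1 m2 m3 i) t - C i (seg m1 m2 m3 i) t)) t) ∧
  (∀ t : ℝ, 0 ≤ t →
    HasDerivAt (W 3 1)
      (-d * W 3 1 t + (d + q) * W 3 2 t + W 3 1 t * (r - W 3 1 t - C 3 1 t)) t) ∧
  (∀ t : ℝ, 0 ≤ t →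
    HasDerivAt (W 3 m3)
      (d * W 3 (m3 - 1) t - (3 * d + q) * W 3 m3 t + (d + q) * (W 1 1 t + W 2 1 t)
        + W 3 m3 t * (r - W 3 m3 t - C 3 m3 t)) t)

/-- Solution of the two-species competition patch model on the Y-shaped network. -/
def YSolution (m1 m2 m3 : ℕ) (d1 q1 d2 q2 r : ℝ) (U V : ℕ → ℕ → ℝ → ℝ) : Prop :=
  YFlow m1 m2 m3 d1 q1 r U V ∧ YFlow m1 m2 m3 d2 q2 r V U

/-- Nonnegative, not identically zero initial data. -/
def YInit (m1 m2 m3 : ℕ) (W : ℕ → ℕ → ℝ → ℝ) : Prop :=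
  (∀ i k, (i = 1 ∨ i = 2 ∨ i = 3) → 1 ≤ k → k ≤ seg m1 m2 m3 i → 0 ≤ W i k 0) ∧
  (∃ i k, (i = 1 ∨ i = 2 ∨ i = 3) ∧ 1 ≤ k ∧ k ≤ seg m1 m2 m3 i ∧ 0 < W i k 0)


/-- Flux sequence on a segment: `rF d q U k = d * U (k-1) - (d+q) * U k`. -/
def rF (d q : ℝ) (U : ℕ → ℝ) (k : ℕ) : ℝ := d * U (k - 1) - (d + q) * U k

lemma mulNP {a b : ℝ} (ha : a ≤ 0) (hb : 0 ≤ b) : a * b ≤ 0 := by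
  have := mul_nonneg (neg_nonneg.2 ha) hb; linarith [this]

lemma mulPP {a b : ℝ} (ha : a ≤ 0) (hb : b ≤ 0) : 0 ≤ a * b := by
  have := mul_nonneg (neg_nonneg.2 ha) (neg_nonneg.2 hb); linarith [this]

/-- The downward-propagating invariant. -/
abbrev rInv (d1 q1 d2 q2 r : ℝ) (U V : ℕ → ℝ) (j : ℕ) : Prop :=
  (rF d2 q2 V j ≤ 0 ∧ rF d2 q2 V j * U j - rF d1 q1 U j * V j ≤ 0 ∧
      (rF d2 q2 V j * U j - rF d1 q1 U j * V j < 0 ∨ rF d1 q1 U j < 0)) ∨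
    (0 < rF d1 q1 U j ∧ r - U j - V j < 0) ∨
    (rF d1 q1 U j = 0 ∧ rF d2 q2 V j = 0 ∧ r - U j - V j = 0)

set_option maxHeartbeats 1000000 in
/-- One-step propagation of the invariant, purely in terms of real numbers. -/
lemma riverStep (d1 q1 d2 q2 r u0 v0 u1 v1 F0 G0 F1 G1 : ℝ)
    (hd1 : 0 < d1) (hq1 : 0 < q1) (hd2 : 0 < d2) (hq2 : 0 < q2)
    (hdd : d2 ≤ d1) (hE : d1 * q2 ≤ d2 * q1) (hne : d2 < d1 ∨ d1 * q2 < d2 * q1)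
    (hu0 : 0 < u0) (hv0 : 0 < v0) (hu1 : 0 < u1) (hv1 : 0 < v1)
    (hdu : d1 * u0 = (d1 + q1) * u1 + F1) (hdv : d2 * v0 = (d2 + q2) * v1 + G1)
    (eF : F0 = F1 - u0 * (r - u0 - v0)) (eG : G0 = G1 - v0 * (r - u0 - v0))
    (hnext : (G1 ≤ 0 ∧ G1 * u1 - F1 * v1 ≤ 0 ∧ (G1 * u1 - F1 * v1 < 0 ∨ F1 < 0)) ∨
      (0 < F1 ∧ r - u1 - v1 < 0) ∨ (F1 = 0 ∧ G1 = 0 ∧ r - u1 - v1 = 0)) :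
    (G0 ≤ 0 ∧ G0 * u0 - F0 * v0 ≤ 0 ∧ (G0 * u0 - F0 * v0 < 0 ∨ F0 < 0)) ∨
      (0 < F0 ∧ r - u0 - v0 < 0) := by
  have P1 : G0 * u0 - F0 * v0 = G1 * u0 - F1 * v0 := by rw [eF, eG]; ring
  have key : d1 * d2 * (G1 * u0 - F1 * v0) =
      d2 * (d1 + q1) * (G1 * u1 - F1 * v1) + (d2 * q1 - d1 * q2) * (F1 * v1)
        - (d1 - d2) * (F1 * G1) := by
    linear_combination d2 * G1 * hdu - d1 * F1 * hdv
  have HA : G1 ≤ 0 → G1 * u1 - F1 * v1 ≤ 0 → (G1 * u1 - F1 * v1 < 0 ∨ F1 < 0) →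
      (G0 ≤ 0 ∧ G0 * u0 - F0 * v0 ≤ 0 ∧ (G0 * u0 - F0 * v0 < 0 ∨ F0 < 0)) ∨
        (0 < F0 ∧ r - u0 - v0 < 0) := by
    intro hG1 hZ1 hstr
    have hZ0 : G1 * u0 - F1 * v0 < 0 := by
      rcases le_or_gt F1 0 with hF1 | hF1
      · -- use key; all three RHS terms ≤ 0 with at least one strict
        have hdd12 : 0 < d1 * d2 := mul_pos hd1 hd2
        have t2 : (d2 * q1 - d1 * q2) * (F1 * v1) ≤ 0 := by
          have h1 : F1 * v1 ≤ 0 := mulNP hF1 hv1.le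
          have h2 := mulNP h1 (show (0:ℝ) ≤ d2 * q1 - d1 * q2 by linarith)
          linarith [h2]
        have t3 : 0 ≤ (d1 - d2) * (F1 * G1) :=
          mul_nonneg (by linarith) (mulPP hF1 hG1)
        have hstrict : d1 * d2 * (G1 * u0 - F1 * v0) < 0 := by
          rcases hstr with hs | hs
          · have t1 : d2 * (d1 + q1) * (G1 * u1 - F1 * v1) < 0 :=
              mul_neg_of_pos_of_neg (by positivity) hs
            linarith [key]
          · have t1 : d2 * (d1 + q1) * (G1 * u1 - F1 * v1) ≤ 0 := by
              have h2 := mulNP hZ1 (show (0:ℝ) ≤ d2 * (d1 + q1) by positivity)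
              linarith [h2]
            have hG1lt : G1 < 0 := by
              rcases hG1.lt_or_eq with h0 | h0
              · exact h0
              · exfalso
                rw [h0] at hZ1
                have := mul_pos (neg_pos.2 hs) hv1
                linarith [this]
            rcases hne with h | h
            · have t3' : 0 < (d1 - d2) * (F1 * G1) :=
                mul_pos (by linarith) (mul_pos_of_neg_of_neg hs hG1lt)
              linarith [key]
            · have t2' : (d2 * q1 - d1 * q2) * (F1 * v1) < 0 := by
                have := mul_pos (mul_pos (sub_pos.2 h) (neg_pos.2 hs)) hv1
                linarith [this]
              linarith [key]
        by_contra hc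
        push_neg at hc
        have := mul_nonneg hdd12.le hc
        linarith
      · -- F1 > 0 : immediate
        have h1 : G1 * u0 ≤ 0 := mulNP hG1 hu0.le
        have h2 : 0 < F1 * v0 := mul_pos hF1 hv0
        linarith
    rcases le_or_gt G0 0 with hG0 | hG0
    · exact Or.inl ⟨hG0, by rw [P1]; exact hZ0.le, Or.inl (by rw [P1]; exact hZ0)⟩
    · refine Or.inr ⟨?_, ?_⟩
      · by_contra hc
        push_neg at hc
        have h1 : F0 * v0 ≤ 0 := mulNP hc hv0.le
        have h2 : 0 < G0 * u0 := mul_pos hG0 hu0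
        linarith [P1, hZ0]
      · by_contra hc
        push_neg at hc
        have h1 : 0 ≤ v0 * (r - u0 - v0) := mul_nonneg hv0.le hc
        linarith [eG]
  rcases hnext with ⟨hG1, hZ1, hstr⟩ | ⟨hF1, hR1⟩ | ⟨hF1, hG1, hR1⟩
  · exact HA hG1 hZ1 hstr
  · rcases le_or_gt G1 0 with hG1 | hG1
    · have hZ1 : G1 * u1 - F1 * v1 < 0 := by
        have h1 : G1 * u1 ≤ 0 := mulNP hG1 hu1.le
        have h2 : 0 < F1 * v1 := mul_pos hF1 hv1
        linarith
      exact HA hG1 hZ1.le (Or.inl hZ1)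
    · have hu01 : u1 < u0 := by
        by_contra hc
        push_neg at hc
        have h1 : 0 ≤ d1 * (u1 - u0) := mul_nonneg hd1.le (by linarith)
        have h2 : 0 < q1 * u1 := mul_pos hq1 hu1
        linarith [hdu]
      have hv01 : v1 < v0 := by
        by_contra hc
        push_neg at hc
        have h1 : 0 ≤ d2 * (v1 - v0) := mul_nonneg hd2.le (by linarith)
        have h2 : 0 < q2 * v1 := mul_pos hq2 hv1
        linarith [hdv]
      have hR0 : r - u0 - v0 < 0 := by linarith
      refine Or.inr ⟨?_, hR0⟩
      rw [eF]
      have := mul_neg_of_pos_of_neg hu0 hR0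
      linarith
  · have hu01 : u1 < u0 := by
      by_contra hc
      push_neg at hc
      have h1 : 0 ≤ d1 * (u1 - u0) := mul_nonneg hd1.le (by linarith)
      have h2 : 0 < q1 * u1 := mul_pos hq1 hu1
      linarith [hdu, hF1]
    have hv01 : v1 < v0 := by
      by_contra hc
      push_neg at hc
      have h1 : 0 ≤ d2 * (v1 - v0) := mul_nonneg hd2.le (by linarith)
      have h2 : 0 < q2 * v1 := mul_pos hq2 hv1
      linarith [hdv, hG1]
    have hR0 : r - u0 - v0 < 0 := by linarith
    refine Or.inr ⟨?_, hR0⟩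
    rw [eF, hF1]
    have := mul_neg_of_pos_of_neg hu0 hR0
    linarith

set_option maxHeartbeats 1000000 in
/-- The segment-local form of Lemma 3.2(ii). -/
lemma riverSeg (d1 q1 d2 q2 r : ℝ)
    (hd1 : 0 < d1) (hq1 : 0 < q1) (hd2 : 0 < d2) (hq2 : 0 < q2)
    (hdd : d2 ≤ d1) (hE : d1 * q2 ≤ d2 * q1) (hne : d2 < d1 ∨ d1 * q2 < d2 * q1)
    (m : ℕ) (hm : 1 ≤ m) (U V : ℕ → ℝ)
    (hU : ∀ k, k ≤ m → 0 < U k) (hV : ∀ k, k ≤ m → 0 < V k)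
    (hIntU : ∀ k, 1 ≤ k → k + 1 ≤ m →
      d1 * U (k - 1) - (2 * d1 + q1) * U k + (d1 + q1) * U (k + 1)
        + U k * (r - U k - V k) = 0)
    (hIntV : ∀ k, 1 ≤ k → k + 1 ≤ m →
      d2 * V (k - 1) - (2 * d2 + q2) * V k + (d2 + q2) * V (k + 1)
        + V k * (r - V k - U k) = 0)
    (hTopU : -(d1 + q1) * U m + d1 * U (m - 1) + U m * (r - U m - V m) = 0)
    (hTopV : -(d2 + q2) * V m + d2 * V (m - 1) + V m * (r - V m - U m) = 0)
    (l : ℕ) (hl : 1 ≤ l) (hlm : l ≤ m) (hf : rF d1 q1 U l ≤ 0) :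
    (l = m → rF d2 q2 V l ≤ 0) ∧ (l < m → rF d2 q2 V l < 0) := by
  have hFm : rF d1 q1 U m = -(U m * (r - U m - V m)) := by
    simp only [rF]; linear_combination hTopU
  have hGm : rF d2 q2 V m = -(V m * (r - U m - V m)) := by
    simp only [rF]; linear_combination hTopV
  have base : rInv d1 q1 d2 q2 r U V m := by
    rcases lt_trichotomy (r - U m - V m) 0 with hR | hR | hR
    · refine Or.inr (Or.inl ⟨?_, hR⟩)
      rw [hFm]
      have := mul_neg_of_pos_of_neg (hU m le_rfl) hR
      linarith
    · refine Or.inr (Or.inr ⟨?_, ?_, hR⟩)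
      · rw [hFm, hR]; ring
      · rw [hGm, hR]; ring
    · refine Or.inl ⟨?_, ?_, Or.inr ?_⟩
      · rw [hGm]
        have := mul_pos (hV m le_rfl) hR
        linarith
      · rw [hFm, hGm]
        have h0 : -(V m * (r - U m - V m)) * U m - -(U m * (r - U m - V m)) * V m = 0 := by
          ring
        linarith
      · rw [hFm]
        have := mul_pos (hU m le_rfl) hR
        linarith
  have step : ∀ j, 1 ≤ j → j + 1 ≤ m → rInv d1 q1 d2 q2 r U V (j + 1) →
      (rF d2 q2 V j ≤ 0 ∧ rF d2 q2 V j * U j - rF d1 q1 U j * V j ≤ 0 ∧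
          (rF d2 q2 V j * U j - rF d1 q1 U j * V j < 0 ∨ rF d1 q1 U j < 0)) ∨
        (0 < rF d1 q1 U j ∧ r - U j - V j < 0) := by
    intro j hj1 hj2 hnext
    refine riverStep d1 q1 d2 q2 r (U j) (V j) (U (j+1)) (V (j+1))
      (rF d1 q1 U j) (rF d2 q2 V j) (rF d1 q1 U (j+1)) (rF d2 q2 V (j+1))
      hd1 hq1 hd2 hq2 hdd hE hne
      (hU j (by omega)) (hV j (by omega)) (hU (j+1) hj2) (hV (j+1) hj2)
      ?_ ?_ ?_ ?_ hnext
    · simp only [rF, Nat.add_sub_cancel]; ring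
    · simp only [rF, Nat.add_sub_cancel]; ring
    · have h := hIntU j hj1 hj2
      simp only [rF, Nat.add_sub_cancel]; linear_combination h
    · have h := hIntV j hj1 hj2
      simp only [rF, Nat.add_sub_cancel]; linear_combination h
  have chain : ∀ t, ∀ j, 1 ≤ j → j + t = m → rInv d1 q1 d2 q2 r U V j := by
    intro t
    induction t with
    | zero =>
        intro j hj hjm
        have hjm' : j = m := by omega
        rw [hjm']; exact base
    | succ t ih =>
        intro j hj hjm
        have hnext := ih (j + 1) (by omega) (by omega)
        rcases step j hj (by omega) hnext with h | h
        · exact Or.inl h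
        · exact Or.inr (Or.inl h)
  constructor
  · intro he
    rw [he] at hf ⊢
    have hR : 0 ≤ r - U m - V m := by
      by_contra hc
      push_neg at hc
      have := mul_neg_of_pos_of_neg (hU m le_rfl) hc
      rw [hFm] at hf
      linarith
    rw [hGm]
    have := mul_nonneg (hV m le_rfl).le hR
    linarith
  · intro hlt
    have hnext := chain (m - (l + 1)) (l + 1) (by omega) (by omega)
    have hUl : 0 < U l := hU l hlm
    have hVl : 0 < V l := hV l hlm
    rcases step l hl (by omega) hnext with ⟨hG, hZle, hstr⟩ | ⟨hF, _⟩
    · rcases hstr with hs | hs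
      · by_contra hc
        push_neg at hc
        have h1 : 0 ≤ rF d2 q2 V l * U l := mul_nonneg hc hUl.le
        have h2 : rF d1 q1 U l * V l ≤ 0 := mulNP hf hVl.le
        linarith
      · by_contra hc
        push_neg at hc
        have h1 : 0 ≤ rF d2 q2 V l * U l := mul_nonneg hc hUl.le
        have h2 : rF d1 q1 U l * V l < 0 := mul_neg_of_neg_of_pos hs hVl
        linarith
    · linarith

set_option maxHeartbeats 1000000 in
/-- **Lemma 3.2(ii)**. -/
theorem stmt_2
    (m1 m2 m3 : ℕ) (d1 q1 d2 q2 r : ℝ)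
    (hm1 : 1 ≤ m1) (hm12 : m1 ≤ m2) (hm3 : 2 ≤ m3)
    (hd1 : 0 < d1) (hq1 : 0 < q1) (hr : 0 < r)
    (hS1 : S1mem d1 q1 d2 q2)
    (u v : ℕ → ℕ → ℝ)
    (heq : YPosEquilibrium m1 m2 m3 d1 q1 d2 q2 r u v)
    (i : ℕ) (hi : i = 1 ∨ i = 2)
    (l : ℕ) (hl : 1 ≤ l) (hl' : l ≤ seg m1 m2 m3 i)
    (hf : Yf m1 m2 m3 d1 q1 u i l ≤ 0) :
    (l = seg m1 m2 m3 i → Yf m1 m2 m3 d2 q2 v i l ≤ 0) ∧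
      (l < seg m1 m2 m3 i → Yf m1 m2 m3 d2 q2 v i l < 0) := by
  obtain ⟨hd2, hdd, hq2, hq2le, hneq⟩ := hS1
  obtain ⟨hPu, hPv, hEqU, hEqV⟩ := heq
  set m := seg m1 m2 m3 i with hmdef
  have hseg3 : seg m1 m2 m3 3 = m3 := by norm_num [seg]
  have hi3 : ¬ i = 3 := by rcases hi with h | h <;> omega
  have hm : 1 ≤ m := by
    rcases hi with h | h <;> simp [hmdef, seg, h] <;> omega
  have hE : d1 * q2 ≤ d2 * q1 := by
    rw [div_mul_eq_mul_div, le_div_iff₀ hd1] at hq2le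
    linarith
  have hne : d2 < d1 ∨ d1 * q2 < d2 * q1 := by
    rcases lt_or_eq_of_le hdd with h | h
    · exact Or.inl h
    · right
      rcases lt_or_eq_of_le hE with h2 | h2
      · exact h2
      · exfalso
        apply hneq
        have hq : q2 = q1 := by
          apply mul_left_cancel₀ (ne_of_gt hd1)
          rw [h2, h]
        rw [h, hq]
  have hU : ∀ k, k ≤ m → 0 < u i k := by
    intro k hk
    rcases Nat.eq_zero_or_pos k with h0 | h0
    · rw [h0]
      have h3 : 0 < u 3 m3 :=
        hPu 3 m3 (Or.inr (Or.inr rfl)) (by omega) (by rw [hseg3])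
      rcases hi with h | h
      · rw [h, hEqU.1]; exact h3
      · rw [h, hEqU.2.1]; exact h3
    · exact hPu i k (by rcases hi with h | h <;> [exact Or.inl h; exact Or.inr (Or.inl h)])
        h0 hk
  have hV : ∀ k, k ≤ m → 0 < v i k := by
    intro k hk
    rcases Nat.eq_zero_or_pos k with h0 | h0
    · rw [h0]
      have h3 : 0 < v 3 m3 :=
        hPv 3 m3 (Or.inr (Or.inr rfl)) (by omega) (by rw [hseg3])
      rcases hi with h | h
      · rw [h, hEqV.1]; exact h3
      · rw [h, hEqV.2.1]; exact h3
    · exact hPv i k (by rcases hi with h | h <;> [exact Or.inl h; exact Or.inr (Or.inl h)])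
        h0 hk
  have key := riverSeg d1 q1 d2 q2 r hd1 hq1 hd2 hq2 hdd hE hne m hm (u i) (v i)
    hU hV (fun k hk1 hk2 => hEqU.2.2.1 i hi k hk1 hk2)
    (fun k hk1 hk2 => hEqV.2.2.1 i hi k hk1 hk2)
    (hEqU.2.2.2.2.1 i hi) (hEqV.2.2.2.2.1 i hi) l hl hl' ?_
  · have hYf : Yf m1 m2 m3 d2 q2 v i l = rF d2 q2 (v i) l := by
      simp only [Yf, rF, if_neg hi3, if_pos (show 1 ≤ l ∧ l ≤ seg m1 m2 m3 i from And.intro hl hl')]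
    rw [hYf]
    exact key
  · have hYf : Yf m1 m2 m3 d1 q1 u i l = rF d1 q1 (u i) l := by
      simp only [Yf, rF, if_neg hi3, if_pos (show 1 ≤ l ∧ l ≤ seg m1 m2 m3 i from And.intro hl hl')]
    rw [← hYf]
    exact hf
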